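/- If an object $O_1$ strongly observationally refines an object $O_2$, then for every program $P$ and every hyperproperty $\varphi$ of $P$, $P\times O_2\models\varphi$ implies $P\times O_1\models\varphi$. -/
import Mathlib


set_option autoImplicit false

/-- A labeled transition system over an alphabet of actions drawn from `Act`:
a set of states, an initial state, an alphabet (subset of `Act`), and a
transition relation. -/
structure LTS (Act : Type) : Type 1 where
  State : Type
  init : State
  alphabet : Set Act
  tr : State → Act → State → Prop

namespace LTS

variable {Act : Type}

/-- `Steps A s τ s'`: there is an execution of `A` from `s` to `s'` whose
sequence of actions is `τ`. -/
inductive Steps (A : LTS Act) : A.State → List Act → A.State → Prop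
  | refl (s : A.State) : Steps A s [] s
  | step {s s' s'' : A.State} {a : Act} {τ : List Act} :
      A.tr s a s' → Steps A s' τ s'' → Steps A s (a :: τ) s''

/-- The set of traces of an LTS. -/
def Traces (A : LTS Act) : Set (List Act) := {τ | ∃ s, A.Steps A.init τ s}

/-- A state is reachable if some execution from the initial state ends in it. -/
def Reachable (A : LTS Act) (s : A.State) : Prop := ∃ τ, A.Steps A.init τ s

/-- A deterministic LTS: at most one successor per state and action (hence at
most one state reachable via any given sequence of actions). -/
def Deterministic (A : LTS Act) : Prop :=
  ∀ s a s₁ s₂, A.tr s a s₁ → A.tr s a s₂ → s₁ = s₂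

/-- The standard synchronized product of two LTSs: they synchronize on shared
alphabet actions, and move independently on non-shared actions. -/
def prod (A B : LTS Act) : LTS Act where
  State := A.State × B.State
  init := (A.init, B.init)
  alphabet := A.alphabet ∪ B.alphabet
  tr p a q :=
    (a ∈ A.alphabet ∧ a ∈ B.alphabet ∧ A.tr p.1 a q.1 ∧ B.tr p.2 a q.2) ∨
    (a ∈ A.alphabet ∧ a ∉ B.alphabet ∧ A.tr p.1 a q.1 ∧ q.2 = p.2) ∨
    (a ∉ A.alphabet ∧ a ∈ B.alphabet ∧ B.tr p.2 a q.2 ∧ q.1 = p.1)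

end LTS

open Classical in
/-- `proj Γ τ` is the projection `τ|Γ`: the maximal subsequence of `τ` over
the alphabet `Γ`. -/
noncomputable def proj {Act : Type} (Γ : Set Act) : List Act → List Act
  | [] => []
  | a :: τ => if a ∈ Γ then a :: proj Γ τ else proj Γ τ

/-- `A₁` Γ-refines `A₂`: `T(A₁)|Γ ⊆ T(A₂)|Γ`. -/
def GammaRefines {Act : Type} (A₁ A₂ : LTS Act) (Γ : Set Act) : Prop :=
  proj Γ '' A₁.Traces ⊆ proj Γ '' A₂.Traces

/-- `F` is a `Γ`-forward simulation from `A₁` to `A₂`. -/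
def ForwardSim {Act : Type} (Γ : Set Act) (A₁ A₂ : LTS Act)
    (F : A₁.State → A₂.State → Prop) : Prop :=
  F A₁.init A₂.init ∧
  ∀ s₁ a s₁' s₂, A₁.tr s₁ a s₁' → F s₁ s₂ →
    ∃ s₂' τ, F s₁' s₂' ∧ A₂.Steps s₂ τ s₂' ∧ proj Γ τ = proj Γ [a]

/-- A scheduler: prescribes a set of possible next actions after a given
sequence of previous actions. -/
def Scheduler (Act : Type) : Type := List Act → Set Act

/-- A trace is consistent with a scheduler `S` if each of its actions is
allowed by `S` after the preceding prefix. -/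
def ConsistentWith {Act : Type} (S : Scheduler Act) (τ : List Act) : Prop :=
  ∀ (i : ℕ) (h : i < τ.length), τ.get ⟨i, h⟩ ∈ S (τ.take i)

/-- `T(A,S)`: the traces of `A` consistent with the scheduler `S`. -/
def TracesWith {Act : Type} (A : LTS Act) (S : Scheduler Act) : Set (List Act) :=
  {τ | τ ∈ A.Traces ∧ ConsistentWith S τ}

/-- A scheduler is admitted by `A` if after every trace of `A` consistent with
it, it prescribes a nonempty set of actions, all enabled in the state reached
after that trace. -/
def AdmittedBy {Act : Type} (S : Scheduler Act) (A : LTS Act) : Prop :=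
  ∀ τ ∈ TracesWith A S, (S τ).Nonempty ∧
    ∀ a ∈ S τ, ∀ s, A.Steps A.init τ s → ∃ s', A.tr s a s'

/-- A scheduler of a product `P × O` is deterministic when, after any sequence,
it either prescribes only program actions or fixes a unique action. -/
def DetScheduler {Act : Type} (S : Scheduler Act) (Sp : Set Act) : Prop :=
  ∀ τ, S τ ⊆ Sp ∨ ∃ a, S τ = {a}

/-- The LTS `A_S` of a scheduler `S`: states are sequences of actions, and a
transition labeled `a` links `τ` to `τ ++ [a]` provided `a ∈ S τ`. -/
def schedLTS {Act : Type} (S : Scheduler Act) (Alph : Set Act) : LTS Act where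
  State := List Act
  init := []
  alphabet := Alph
  tr τ a τ' := a ∈ S τ ∧ τ' = τ ++ [a]

/-- OActions: calls `call(m,d,k)`, returns `ret(m,d,k)` (method `m`,
argument/return value `d`, operation identifier `k`), linearization-point
actions `lin(k)`, and other (internal or program) actions. -/
inductive OAction (M D K I : Type) : Type
  | call (m : M) (d : D) (k : K)
  | ret (m : M) (d : D) (k : K)
  | lin (k : K)
  | other (i : I)

/-- The set of all call actions. -/
def Calls {M D K I : Type} : Set (OAction M D K I) :=
  {a | ∃ m d k, a = OAction.call m d k}

/-- The set of all return actions. -/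
def Rets {M D K I : Type} : Set (OAction M D K I) :=
  {a | ∃ m d k, a = OAction.ret m d k}

/-- The set of all linearization-point actions. -/
def Lins {M D K I : Type} : Set (OAction M D K I) :=
  {a | ∃ k, a = OAction.lin k}

/-- A call action and a return action are matching when they have the same
method and the same operation identifier. -/
def Matching {M D K I : Type} (a b : OAction M D K I) : Prop :=
  ∃ m d d' k, a = OAction.call m d k ∧ b = OAction.ret m d' k

/-- A history is well-formed when every return action has a preceding matching
call action. -/
def WellFormedHist {M D K I : Type} (h : List (OAction M D K I)) : Prop :=
  ∀ l₁ b l₂, h = l₁ ++ b :: l₂ → b ∈ Rets → ∃ a ∈ l₁, Matching a b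

/-- A call action is unmatched in `h` when `h` contains no matching return. -/
def UnmatchedCall {M D K I : Type} (h : List (OAction M D K I))
    (a : OAction M D K I) : Prop :=
  a ∈ h ∧ a ∈ Calls ∧ ∀ b ∈ h, ¬ Matching a b

/-- A history is sequential if every call action is immediately followed by its
matching return. -/
def SequentialHist {M D K I : Type} (h : List (OAction M D K I)) : Prop :=
  ∀ l₁ a l₂, h = l₁ ++ a :: l₂ → a ∈ Calls →
    ∃ b l₃, l₂ = b :: l₃ ∧ Matching a b

/-- `a` occurs before `b` in the sequence `l`. -/
def OccursBefore {M D K I : Type} (a b : OAction M D K I)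
    (l : List (OAction M D K I)) : Prop :=
  ∃ l₁ l₂ l₃, l = l₁ ++ a :: (l₂ ++ b :: l₃)

/-- `LinRel h₁ h₂` (i.e. `h₁ ⊑ h₂`): there is a well-formed `h₁'` obtained from
`h₁` by deleting unmatched call actions and appending return actions matching
unmatched calls of `h₁`, such that `h₂` is a permutation of `h₁'` preserving
the order between return and call actions. `h₂` is a linearization of `h₁`. -/
def LinRel {M D K I : Type} (h₁ h₂ : List (OAction M D K I)) : Prop :=
  ∃ hdel r : List (OAction M D K I),
    hdel.Sublist h₁ ∧
    (∀ a, a ∈ h₁ → a ∉ hdel → UnmatchedCall h₁ a) ∧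
    (∀ b ∈ r, b ∈ Rets ∧ ∃ a, UnmatchedCall h₁ a ∧ Matching a b) ∧
    WellFormedHist (hdel ++ r) ∧
    h₂.Perm (hdel ++ r) ∧
    (∀ a b : OAction M D K I, a ∈ Rets → b ∈ Calls →
      (OccursBefore a b (hdel ++ r) ↔ OccursBefore a b h₂))

/-- An object over call actions `C` and return actions `R`: a deterministic
LTS whose alphabet consists of `C`, `R` and internal actions, and whose traces
have well-formed histories. -/
structure IsObject {M D K I : Type} (O : LTS (OAction M D K I))
    (C R : Set (OAction M D K I)) : Prop where
  callsSub : C ⊆ Calls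
  retsSub : R ⊆ Rets
  alphSub : C ∪ R ⊆ O.alphabet
  internalNotCR : ∀ a ∈ O.alphabet, a ∉ C ∪ R →
    a ∉ (Calls : Set (OAction M D K I)) ∧ a ∉ (Rets : Set (OAction M D K I))
  trInAlph : ∀ s a s', O.tr s a s' → a ∈ O.alphabet
  det : O.Deterministic
  wf : ∀ τ ∈ O.Traces, WellFormedHist (proj (C ∪ R) τ)

/-- A program over alphabet `Sp ∪ C ∪ R`: a deterministic LTS whose program
actions `Sp` are disjoint from the call and return actions. -/
structure IsProgram {M D K I : Type} (P : LTS (OAction M D K I))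
    (C R Sp : Set (OAction M D K I)) : Prop where
  alph : P.alphabet = Sp ∪ (C ∪ R)
  disj : Disjoint Sp (C ∪ R)
  trInAlph : ∀ s a s', P.tr s a s' → a ∈ P.alphabet
  det : P.Deterministic

/-- The set of histories `H(O)` of an object. -/
def Hists {M D K I : Type} (O : LTS (OAction M D K I))
    (C R : Set (OAction M D K I)) : Set (List (OAction M D K I)) :=
  proj (C ∪ R) '' O.Traces

/-- `O₁` observationally refines `O₂`: for every program `P` over alphabet
`Sp ∪ C ∪ R`, `T(P × O₁)|Sp ⊆ T(P × O₂)|Sp`. -/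
def ObsRefines {M D K I : Type} (O₁ O₂ : LTS (OAction M D K I))
    (C R : Set (OAction M D K I)) : Prop :=
  ∀ (Sp : Set (OAction M D K I)) (P : LTS (OAction M D K I)),
    IsProgram P C R Sp → Disjoint Sp O₁.alphabet → Disjoint Sp O₂.alphabet →
    proj Sp '' (P.prod O₁).Traces ⊆ proj Sp '' (P.prod O₂).Traces

/-- `O₁ ≤ₛ O₂`: `O₁` strongly observationally refines `O₂`: for every program
`P` and every deterministic scheduler `S₁` admitted by `P × O₁`, there is a
deterministic scheduler `S₂` admitted by `P × O₂` with
`T(P × O₁, S₁)|Sp = T(P × O₂, S₂)|Sp`. -/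
def StrongRefines {M D K I : Type} (O₁ O₂ : LTS (OAction M D K I))
    (C R : Set (OAction M D K I)) : Prop :=
  ∀ (Sp : Set (OAction M D K I)) (P : LTS (OAction M D K I)),
    IsProgram P C R Sp → Disjoint Sp O₁.alphabet → Disjoint Sp O₂.alphabet →
    ∀ S₁ : Scheduler (OAction M D K I), DetScheduler S₁ Sp →
      AdmittedBy S₁ (P.prod O₁) →
      ∃ S₂ : Scheduler (OAction M D K I), DetScheduler S₂ Sp ∧
        AdmittedBy S₂ (P.prod O₂) ∧
        proj Sp '' TracesWith (P.prod O₁) S₁ =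
          proj Sp '' TracesWith (P.prod O₂) S₂

/-- `P × O ⊨ φ`: the hyperproperty `φ` (a set of sets of sequences of program
actions) is satisfied by the program `P` with the object `O`:
`T(P × O, S)|Sp ∈ φ` for every deterministic scheduler `S`. -/
def Satisfies {M D K I : Type} (P O : LTS (OAction M D K I))
    (Sp : Set (OAction M D K I))
    (φ : Set (Set (List (OAction M D K I)))) : Prop :=
  ∀ S : Scheduler (OAction M D K I), DetScheduler S Sp →
    AdmittedBy S (P.prod O) →
    proj Sp '' TracesWith (P.prod O) S ∈ φ

/-- `O₁ ⊑ O₂`: every history of `O₁` has a linearization that is a sequential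
history of `O₂`. -/
def Linearizable {M D K I : Type} (O₁ O₂ : LTS (OAction M D K I))
    (C R : Set (OAction M D K I)) : Prop :=
  ∀ h₁ ∈ Hists O₁ C R,
    ∃ h₂ ∈ Hists O₂ C R, SequentialHist h₂ ∧ LinRel h₁ h₂

/-- An object is atomic if its set of histories is the set of histories
linearizable w.r.t. some set `Seq` of sequential histories. -/
def IsAtomicObject {M D K I : Type} (O : LTS (OAction M D K I))
    (C R : Set (OAction M D K I)) : Prop :=
  ∃ Seq : Set (List (OAction M D K I)),
    (∀ h ∈ Seq, SequentialHist h ∧ WellFormedHist h) ∧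
    Hists O C R = {h | ∃ h' ∈ Seq, LinRel h h'}

/-- Standard assumptions on objects: call actions cannot be disabled and
cannot disable other actions, and return actions cannot enable other
actions. -/
structure CallRetAssumptions {M D K I : Type} (O : LTS (OAction M D K I))
    (C R : Set (OAction M D K I)) : Prop where
  callsEnabled : ∀ s, O.Reachable s → ∀ c ∈ C, ∃ s', O.tr s c s'
  callsNoDisable : ∀ s c s', c ∈ C → O.tr s c s' →
    ∀ a s₁, O.tr s a s₁ → ∃ s₁', O.tr s' a s₁'
  retsNoEnable : ∀ s r s', r ∈ R → O.tr s r s' →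
    ∀ a s₁, O.tr s' a s₁ → ∃ s₁', O.tr s a s₁'

/-- The atomic object defined by a set `Seq` of sequential histories: states
are pairs `(h, h_s)` with `h_s ∈ Seq` and `h ⊑ h_s`; call actions append to
`h`; return actions append to `h` and must occur in `h_s`; linearization-point
actions `lin(k)` append a call/return pair with identifier `k` to `h_s`. -/
def AtomicLTS {M D K I : Type} (Seq : Set (List (OAction M D K I))) :
    LTS (OAction M D K I) where
  State := List (OAction M D K I) × List (OAction M D K I)
  init := ([], [])
  alphabet := Calls ∪ Rets ∪ Lins
  tr p a q :=
    (q.2 ∈ Seq ∧ LinRel q.1 q.2) ∧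
    ((a ∈ Calls ∧ q.1 = p.1 ++ [a] ∧ q.2 = p.2) ∨
     (a ∈ Rets ∧ q.1 = p.1 ++ [a] ∧ q.2 = p.2 ∧ a ∈ q.2) ∨
     (∃ k, a = OAction.lin k ∧ q.1 = p.1 ∧
        ∃ m d₁ d₂, q.2 = p.2 ++ [OAction.call m d₁ k, OAction.ret m d₂ k]))

/-- `O₁` is strongly linearizable w.r.t. the atomic object defined by `Seq`:
there is a function `f` from traces of `O₁` to `Seq` such that (1) `hist(τ) ⊑
f(τ)` for every trace `τ`, and (2) `f` is prefix-preserving. -/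
def StronglyLinearizable {M D K I : Type} (O₁ : LTS (OAction M D K I))
    (Seq : Set (List (OAction M D K I))) : Prop :=
  ∃ f : List (OAction M D K I) → List (OAction M D K I),
    (∀ τ ∈ O₁.Traces, f τ ∈ Seq ∧
      LinRel (proj ((Calls : Set (OAction M D K I)) ∪ Rets) τ) (f τ)) ∧
    (∀ τ₁ τ₂, τ₁ ∈ O₁.Traces → τ₂ ∈ O₁.Traces → τ₁ <+: τ₂ → f τ₁ <+: f τ₂)
/-- If `O₁` strongly observationally refines `O₂`, then for
every program `P` and every hyperproperty `φ` of `P`, `P × O₂ ⊨ φ` implies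
`P × O₁ ⊨ φ`. -/
theorem strongRefines_preserves_hyperproperties {M D K I : Type}
    (O₁ O₂ : LTS (OAction M D K I)) (C R : Set (OAction M D K I))
    (h₁ : IsObject O₁ C R) (h₂ : IsObject O₂ C R)
    (href : StrongRefines O₁ O₂ C R)
    (Sp : Set (OAction M D K I)) (P : LTS (OAction M D K I))
    (hP : IsProgram P C R Sp)
    (hd₁ : Disjoint Sp O₁.alphabet) (hd₂ : Disjoint Sp O₂.alphabet)
    (φ : Set (Set (List (OAction M D K I))))
    (hsat : Satisfies P O₂ Sp φ) :
    Satisfies P O₁ Sp φ := by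
  intro S₁ hdet hadm
  obtain ⟨S₂, hdet₂, hadm₂, heq⟩ := href Sp P hP hd₁ hd₂ S₁ hdet hadm
  rw [heq]
  exact hsat S₂ hdet₂ hadm₂
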